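/- For an odd prime p, define T_p : Z[[x]] → Z[[x]] by Σ c_n x^n ↦ Σ c_{pn} x^n + (-1/p)·Σ c_n x^{pn}, where (-1/p) is the Legendre symbol. For a Gauss-class R let θ(R) = Σ_{I ∈ R} x^{N(I)}. If p ≡ 3 mod 4, then T_p(θ(R)) = 0. -/

import Mathlib

open GaussianInt PowerSeries Classical

/-- Gauss-equivalence (level `4q`) on (normalized generators of) ideals of odd norm in
`Z[i]` : `α ~ β` iff `N·α ≡ β (mod 4q)` for some integer `N`. -/
def GaussEq (q : ℕ) (α β : GaussianInt) : Prop :=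
  ∃ N : ℤ, ((4 * q : ℤ) : GaussianInt) ∣ ((N : GaussianInt) * α - β)

/-- `θ(R) = Σ_{I ∈ R} x^{N(I)} ∈ Z[[x]]`, for `R` the Gauss-class of `ρ`.  Ideals of
odd norm correspond bijectively to their generators `a + 2bi` with `a` odd and `a > 0`,
so the coefficient of `x^m` is the number of such generators of norm `m` that are
Gauss-equivalent to `ρ`. -/
noncomputable def thetaG (q : ℕ) (ρ : GaussianInt) : PowerSeries ℤ :=
  PowerSeries.mk fun m =>
    (Nat.card {α : GaussianInt //
      Odd α.re ∧ 0 < α.re ∧ Even α.im ∧ GaussEq q α ρ ∧ α.norm = (m : ℤ)} : ℤ)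

/-- The formal Hecke operator `T_p` on `Z[[x]]` for `p ≡ 3 mod 4` (Legendre symbol
`(-1/p) = -1`): `Σ c_n x^n ↦ Σ c_{pn} x^n - Σ c_n x^{pn}`. -/
noncomputable def Tneg (p : ℕ) (f : PowerSeries ℤ) : PowerSeries ℤ :=
  PowerSeries.mk fun n =>
    PowerSeries.coeff (p * n) f - (if p ∣ n then PowerSeries.coeff (n / p) f else 0)


lemma aux_star_natCast (p : ℕ) : star (p : GaussianInt) = (p : GaussianInt) := by
  ext <;> simp [Zsqrtd.re_star, Zsqrtd.im_star]

lemma aux_dvd (p : ℕ) (hp : p.Prime) (hp4 : p % 4 = 3) {α : GaussianInt}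
    (h : (p : ℤ) ∣ α.norm) : (p : GaussianInt) ∣ α := by
  haveI : Fact p.Prime := ⟨hp⟩
  have hprime : Prime (p : GaussianInt) :=
    GaussianInt.prime_of_nat_prime_of_mod_four_eq_three p hp4
  have h2 : (p : GaussianInt) ∣ α * star α := by
    rw [← Zsqrtd.norm_eq_mul_conj]
    obtain ⟨c, hc⟩ := h
    exact ⟨(c : GaussianInt), by rw [hc]; push_cast; ring⟩
  rcases hprime.2.2 _ _ h2 with h3 | h3
  · exact h3
  · obtain ⟨c, hc⟩ := h3
    refine ⟨star c, ?_⟩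
    have := congrArg star hc
    simp only [star_star, star_mul, aux_star_natCast] at this
    rw [this, mul_comm]

lemma aux_coprime (e q : ℕ) (hq : q = 2 ^ e) (p : ℕ) (hp : p.Prime) (hp4 : p % 4 = 3) :
    ∃ u : ℤ, ((4 * q : ℤ)) ∣ (u * p - 1) := by
  have hcop : Nat.Coprime p (4 * q) := by
    subst hq
    have h4 : 4 * 2 ^ e = 2 ^ (e + 2) := by ring
    rw [h4]
    refine Nat.Coprime.pow_right _ ?_
    exact (Nat.coprime_two_right).mpr (Nat.odd_iff.mpr (by omega))
  have : IsCoprime (p : ℤ) ((4 * q : ℕ) : ℤ) := by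
    rw [Int.isCoprime_iff_gcd_eq_one]
    rw [Int.gcd_natCast_natCast]; exact hcop
  obtain ⟨u, v, huv⟩ := this
  exact ⟨u, ⟨-v, by push_cast at huv ⊢; linarith⟩⟩

lemma aux_gaussEq (e q : ℕ) (hq : q = 2 ^ e) (p : ℕ) (hp : p.Prime) (hp4 : p % 4 = 3)
    (β ρ : GaussianInt) : GaussEq q ((p : GaussianInt) * β) ρ ↔ GaussEq q β ρ := by
  constructor
  · rintro ⟨N, h⟩
    refine ⟨N * p, ?_⟩
    have heq : ((N * p : ℤ) : GaussianInt) * β - ρ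
        = (N : GaussianInt) * ((p : GaussianInt) * β) - ρ := by push_cast; ring
    rwa [heq]
  · rintro ⟨N, h⟩
    obtain ⟨u, hu⟩ := aux_coprime e q hq p hp hp4
    refine ⟨N * u, ?_⟩
    have key : ((N * u : ℤ) : GaussianInt) * ((p : GaussianInt) * β) - ρ =
        (N : GaussianInt) * ((u * p - 1 : ℤ) : GaussianInt) * β
          + ((N : GaussianInt) * β - ρ) := by
      push_cast; ring
    rw [key]
    refine dvd_add (Dvd.dvd.mul_right (Dvd.dvd.mul_left ?_ _) _) h
    obtain ⟨c, hc⟩ := hu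
    exact ⟨(c : GaussianInt), by rw [hc]; push_cast; ring⟩

/-- If `p` is a prime `≡ 3 mod 4`, then `T_p(θ(R)) = 0` for every Gauss-class `R`. -/
theorem stmt14 (e : ℕ) (q : ℕ) (hq : q = 2 ^ e)
    (p : ℕ) (hp : p.Prime) (hp4 : p % 4 = 3)
    (ρ : GaussianInt) (hre : Odd ρ.re) (him : Even ρ.im) :
    Tneg p (thetaG q ρ) = 0 := by
  have hpz : (0 : ℤ) < (p : ℤ) := by exact_mod_cast hp.pos
  have hpodd : Odd (p : ℤ) := by exact_mod_cast Nat.odd_iff.mpr (by omega)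
  haveI : Fact p.Prime := ⟨hp⟩
  have hp0 : (p : GaussianInt) ≠ 0 :=
    (GaussianInt.prime_of_nat_prime_of_mod_four_eq_three p hp4).ne_zero
  ext n
  rw [Tneg, coeff_mk, map_zero]
  by_cases hd : p ∣ n
  · obtain ⟨k, rfl⟩ := hd
    simp only [if_pos (dvd_mul_right p k), Nat.mul_div_cancel_left _ hp.pos]
    rw [thetaG, coeff_mk, coeff_mk, sub_eq_zero]
    norm_cast
    apply Nat.card_congr
    refine Equiv.symm (Equiv.ofBijective
      (fun α => ⟨(p : GaussianInt) * α.1, ?_, ?_, ?_, ?_, ?_⟩) ⟨?_, ?_⟩)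
    · obtain ⟨h1, h2, h3, h4, h5⟩ := α.2
      simp only [Zsqrtd.re_mul, Zsqrtd.re_natCast, Zsqrtd.im_natCast, neg_mul,
        zero_mul, mul_zero, add_zero, neg_zero]
      exact Int.odd_mul.mpr ⟨hpodd, h1⟩
    · obtain ⟨h1, h2, h3, h4, h5⟩ := α.2
      simp only [Zsqrtd.re_mul, Zsqrtd.re_natCast, Zsqrtd.im_natCast, neg_mul,
        zero_mul, mul_zero, add_zero, neg_zero]
      exact mul_pos hpz h2
    · obtain ⟨h1, h2, h3, h4, h5⟩ := α.2
      simp only [Zsqrtd.im_mul, Zsqrtd.re_natCast, Zsqrtd.im_natCast,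
        zero_mul, mul_zero, add_zero]
      exact h3.mul_left _
    · exact (aux_gaussEq e q hq p hp hp4 _ ρ).mpr α.2.2.2.2.1
    · rw [Zsqrtd.norm_mul, Zsqrtd.norm_natCast, α.2.2.2.2.2]
      push_cast; ring
    · intro a b hab
      have : (p : GaussianInt) * a.1 = (p : GaussianInt) * b.1 :=
        congrArg Subtype.val hab
      exact Subtype.ext (mul_left_cancel₀ hp0 this)
    · rintro ⟨α, h1, h2, h3, h4, h5⟩
      have hdvd : (p : ℤ) ∣ α.norm := by
        rw [h5]; exact ⟨(p * k : ℕ), by push_cast; ring⟩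
      obtain ⟨β, rfl⟩ := aux_dvd p hp hp4 hdvd
      simp only [Zsqrtd.re_mul, Zsqrtd.im_mul, Zsqrtd.re_natCast, Zsqrtd.im_natCast,
        neg_mul, zero_mul, mul_zero, add_zero, neg_zero] at h1 h2 h3
      refine ⟨⟨β, (Int.odd_mul.mp h1).2, ?_, ?_, (aux_gaussEq e q hq p hp hp4 β ρ).mp h4, ?_⟩,
        rfl⟩
      · rcases mul_pos_iff.mp h2 with ⟨_, h⟩ | ⟨h, _⟩
        · exact h
        · exact absurd h (by linarith)
      · rcases Int.even_mul.mp h3 with h | h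
        · exact absurd h (Int.not_even_iff_odd.mpr hpodd)
        · exact h
      · rw [Zsqrtd.norm_mul, Zsqrtd.norm_natCast] at h5
        have hcancel : ((p : ℤ) * p) * β.norm = ((p : ℤ) * p) * k := by
          push_cast at h5 ⊢; linarith
        exact mul_left_cancel₀ (by positivity) hcancel
  · rw [if_neg hd, sub_zero, thetaG, coeff_mk]
    norm_cast
    rw [Nat.card_eq_zero]
    left
    constructor
    rintro ⟨α, h1, h2, h3, h4, h5⟩
    have hdvd : (p : ℤ) ∣ α.norm := by rw [h5]; exact ⟨n, by push_cast; ring⟩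
    obtain ⟨β, rfl⟩ := aux_dvd p hp hp4 hdvd
    rw [Zsqrtd.norm_mul, Zsqrtd.norm_natCast] at h5
    have : (p : ℤ) ∣ (n : ℤ) := ⟨β.norm, by push_cast at h5 ⊢; nlinarith⟩
    exact hd (by exact_mod_cast Int.ofNat_dvd.mp (by exact_mod_cast this))
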